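/- Let n be even, λ ∈ F with λ² = −1, char F ≠ 2, H = {±1} ≤ GL₁(F), and let K ≤ S_n be transitive preserving the partition {{1,2},…,{n−1,n}}. Then F^n = ⟨e₁+λe₂⟩ ⊕ ⟨e₁−λe₂⟩ ⊕ ⋯ ⊕ ⟨e_{n−1}+λe_n⟩ ⊕ ⟨e_{n−1}−λe_n⟩ is a system of imprimitivity for G = H ≀ K. -/

import Mathlib

/-- The element of `GL(ι → W)` acting as `h` on coordinate `i` and trivially elsewhere. -/
noncomputable def blockGL (F : Type*) [Field F] {ι : Type*} [DecidableEq ι] {W : Type*}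
    [AddCommGroup W] [Module F W] (i : ι) (h : LinearMap.GeneralLinearGroup F W) :
    LinearMap.GeneralLinearGroup F (ι → W) :=
  (LinearMap.GeneralLinearGroup.generalLinearEquiv F (ι → W)).symm
    (LinearEquiv.piCongrRight fun j =>
      if j = i then LinearMap.GeneralLinearGroup.generalLinearEquiv F W h
      else LinearEquiv.refl F W)

/-- The element of `GL(ι → W)` permuting the coordinates according to `π`. -/
noncomputable def permGL (F : Type*) [Field F] {ι : Type*} {W : Type*}
    [AddCommGroup W] [Module F W] (π : Equiv.Perm ι) :
    LinearMap.GeneralLinearGroup F (ι → W) :=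
  (LinearMap.GeneralLinearGroup.generalLinearEquiv F (ι → W)).symm
    (LinearEquiv.piCongrLeft' F (fun _ => W) π)

/-- The wreath product `H ≀ K` as a subgroup of `GL(ι → W)`. -/
noncomputable def wreath (F : Type*) [Field F] {ι : Type*} [DecidableEq ι] {W : Type*}
    [AddCommGroup W] [Module F W] (H : Subgroup (LinearMap.GeneralLinearGroup F W))
    (K : Subgroup (Equiv.Perm ι)) : Subgroup (LinearMap.GeneralLinearGroup F (ι → W)) :=
  Subgroup.closure ({g | ∃ i h, h ∈ H ∧ g = blockGL F i h} ∪ {g | ∃ π ∈ K, g = permGL F π})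

/-- `G` permutes the family `Z` of subspaces. -/
def Permutes (F : Type*) [Field F] {V : Type*} [AddCommGroup V] [Module F V]
    (G : Subgroup (LinearMap.GeneralLinearGroup F V)) {ι : Type*}
    (Z : ι → Submodule F V) : Prop :=
  ∀ g ∈ G, ∀ t, (Z t).map ((g : (V →ₗ[F] V)ˣ) : V →ₗ[F] V) ∈ Set.range Z

/-- `Z` is a decomposition of `V` into nonzero subspaces permuted by `G`; together with the
requirement that the index type has more than one element, this is a system of imprimitivity. -/
def IsSystemOfImprimitivity (F : Type*) [Field F] {V : Type*} [AddCommGroup V] [Module F V]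
    (G : Subgroup (LinearMap.GeneralLinearGroup F V)) {ι : Type*} [DecidableEq ι]
    (Z : ι → Submodule F V) : Prop :=
  (∀ t, Z t ≠ ⊥) ∧ DirectSum.IsInternal Z ∧ Permutes F G Z

/-- `G` acts irreducibly on `V`. -/
def IrreducibleOn (F : Type*) [Field F] {V : Type*} [AddCommGroup V] [Module F V]
    (G : Subgroup (LinearMap.GeneralLinearGroup F V)) : Prop :=
  ∀ U : Submodule F V, (∀ g ∈ G, U.map ((g : (V →ₗ[F] V)ˣ) : V →ₗ[F] V) ≤ U) → U = ⊥ ∨ U = ⊤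

/-- `G` acts primitively on `V`: there is no system of imprimitivity. -/
def PrimitiveOn (F : Type*) [Field F] {V : Type*} [AddCommGroup V] [Module F V]
    (G : Subgroup (LinearMap.GeneralLinearGroup F V)) : Prop :=
  ¬ ∃ (ℓ : ℕ) (Z : Fin ℓ → Submodule F V), 1 < ℓ ∧ IsSystemOfImprimitivity F G Z

/-- The element `-1` of `GL₁(F) = GL(F)`. -/
noncomputable def negGL (F : Type*) [Field F] : LinearMap.GeneralLinearGroup F F :=
  ⟨-LinearMap.id, -LinearMap.id, by ext; simp [Module.End.mul_apply], by ext; simp [Module.End.mul_apply]⟩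

/-- The standard basis vector `eᵢ` of `F^n`. -/
def stdVec (F : Type*) [Field F] (n : ℕ) (i : Fin n) : Fin n → F := Pi.single i 1

section SOIHelpers

variable {F : Type*} [Field F] {ι : Type*} [DecidableEq ι] {W : Type*}
    [AddCommGroup W] [Module F W]

lemma blockGL_val_apply (i : ι) (h : LinearMap.GeneralLinearGroup F W) (x : ι → W) (j : ι) :
    (blockGL F i h).val x j = if j = i then h.val (x j) else x j := by
  show (LinearEquiv.piCongrRight fun j =>
      if j = i then LinearMap.GeneralLinearGroup.generalLinearEquiv F W h
      else LinearEquiv.refl F W) x j = _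
  rw [LinearEquiv.piCongrRight_apply]
  split <;> simp

omit [DecidableEq ι] in
lemma permGL_val_apply (π : Equiv.Perm ι) (x : ι → W) (j : ι) :
    (permGL F π (W := W)).val x j = x (π.symm j) := rfl

lemma negGL_val_apply (x : F) : (negGL F).val x = -x := rfl

lemma negGL_mul_self : negGL F * negGL F = 1 := by
  apply Units.ext; apply LinearMap.ext; intro x
  simp [Units.val_mul, Module.End.mul_apply, negGL]

omit [DecidableEq ι] in
lemma permGL_inv (π : Equiv.Perm ι) : (permGL F π (W := W))⁻¹ = permGL F π⁻¹ := by
  symm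
  rw [eq_inv_iff_mul_eq_one]
  apply Units.ext; apply LinearMap.ext; intro x
  funext j
  rw [Units.val_mul, Module.End.mul_apply]
  rw [permGL_val_apply, permGL_val_apply]
  simp [Equiv.Perm.inv_def]

lemma blockGL_neg_mul_self (i : ι) :
    blockGL F i (negGL F) * blockGL F i (negGL F) = 1 := by
  apply Units.ext; apply LinearMap.ext; intro x
  funext j
  rw [Units.val_mul, Module.End.mul_apply, blockGL_val_apply, blockGL_val_apply]
  split <;> simp [negGL]

lemma blockGL_one (i : ι) : blockGL F i (1 : LinearMap.GeneralLinearGroup F W) = 1 := by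
  apply Units.ext; apply LinearMap.ext; intro x
  funext j
  rw [blockGL_val_apply]
  split <;> simp

end SOIHelpers

namespace SOIAux

lemma A_lt {m : ℕ} (t : Fin m) : 2 * t.val < 2 * m := by omega
/-- index of the first vector in block `t` -/
def A {m : ℕ} (t : Fin m) : Fin (2 * m) := ⟨2 * t.val, A_lt t⟩
lemma B_lt {m : ℕ} (t : Fin m) : 2 * t.val + 1 < 2 * m := by omega
/-- index of the second vector in block `t` -/
def B {m : ℕ} (t : Fin m) : Fin (2 * m) := ⟨2 * t.val + 1, B_lt t⟩
/-- scalar coefficient -/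
def C {F : Type*} [Field F] (lam : F) : Bool → F := fun s => if s then -lam else lam
/-- the spanning vectors -/
def V (F : Type*) [Field F] (lam : F) {m : ℕ} (p : Fin m × Bool) : Fin (2 * m) → F :=
  stdVec F (2 * m) (A p.1) + C lam p.2 • stdVec F (2 * m) (B p.1)

theorem aux (F : Type*) [Field F] (hchar : (2 : F) ≠ 0) (lam : F) (hlam : lam ^ 2 = -1)
    (m : ℕ) (K : Subgroup (Equiv.Perm (Fin (2 * m))))
    (hKpart : ∀ π ∈ K, ∀ t : Fin m, ∃ t' : Fin m,
      ({π (A t), π (B t)} : Set (Fin (2 * m))) = {A t', B t'}) :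
    IsSystemOfImprimitivity F (wreath F (Subgroup.closure {negGL F}) K)
      (fun p : Fin m × Bool => Submodule.span F {V F lam p}) := by
  classical
  have hlam0 : lam ≠ 0 := by intro h; rw [h] at hlam; norm_num at hlam
  have hC0 : ∀ s, C lam s ≠ 0 := by intro s; cases s <;> simp [C, hlam0]
  have hCnot : ∀ s, C lam (!s) = -C lam s := by intro s; cases s <;> simp [C]
  have hCsq : ∀ s, C lam s * C lam s = -1 := by
    intro s; cases s <;> simp [C] <;> linear_combination hlam
  have hAB : ∀ (t t' : Fin m), A t ≠ B t' := by
    intro t t' h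
    have := congrArg Fin.val h
    simp [A, B] at this
    omega
  have hstd : ∀ (k j : Fin (2 * m)), stdVec F (2 * m) k j = if j = k then 1 else 0 := by
    intro k j; simp [stdVec, Pi.single_apply]
  have hVA : ∀ p : Fin m × Bool, V F lam p (A p.1) = 1 := by
    intro p
    simp [V, hstd, hAB p.1 p.1]
  -- spanning
  have hmem : ∀ i : Fin (2 * m),
      stdVec F (2 * m) i ∈ Submodule.span F (Set.range (V F lam (m := m))) := by
    intro i
    rcases Nat.even_or_odd i.val with ⟨k, hk⟩ | ⟨k, hk⟩
    · have hkm : k < m := by omega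
      have hi : i = A ⟨k, hkm⟩ := by simp [A, Fin.ext_iff]; omega
      have key : V F lam (⟨k, hkm⟩, false) + V F lam (⟨k, hkm⟩, true)
          = (2 : F) • stdVec F (2 * m) i := by
        rw [hi]
        show stdVec F (2 * m) _ + lam • stdVec F (2 * m) _
            + (stdVec F (2 * m) _ + (-lam) • stdVec F (2 * m) _) = _
        module
      have he : stdVec F (2 * m) i
          = (2 : F)⁻¹ • (V F lam (⟨k, hkm⟩, false) + V F lam (⟨k, hkm⟩, true)) := by
        rw [key, smul_smul, inv_mul_cancel₀ hchar, one_smul]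
      rw [he]
      exact Submodule.smul_mem _ _ (add_mem (Submodule.subset_span ⟨_, rfl⟩)
        (Submodule.subset_span ⟨_, rfl⟩))
    · have hkm : k < m := by omega
      have hi : i = B ⟨k, hkm⟩ := by simp [B, Fin.ext_iff]; omega
      have key : V F lam (⟨k, hkm⟩, false) - V F lam (⟨k, hkm⟩, true)
          = (2 * lam) • stdVec F (2 * m) i := by
        rw [hi]
        show stdVec F (2 * m) _ + lam • stdVec F (2 * m) _
            - (stdVec F (2 * m) _ + (-lam) • stdVec F (2 * m) _) = _
        module
      have he : stdVec F (2 * m) i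
          = (2 * lam)⁻¹ • (V F lam (⟨k, hkm⟩, false) - V F lam (⟨k, hkm⟩, true)) := by
        rw [key, smul_smul, inv_mul_cancel₀ (mul_ne_zero hchar hlam0), one_smul]
      rw [he]
      exact Submodule.smul_mem _ _ (sub_mem (Submodule.subset_span ⟨_, rfl⟩)
        (Submodule.subset_span ⟨_, rfl⟩))
  have hspan : Submodule.span F (Set.range (V F lam (m := m))) = ⊤ := by
    rw [eq_top_iff, ← (Pi.basisFun F (Fin (2 * m))).span_eq, Submodule.span_le]
    rintro x ⟨i, rfl⟩
    have hb : (Pi.basisFun F (Fin (2 * m))) i = stdVec F (2 * m) i := by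
      simp [stdVec, Pi.basisFun_apply]
    rw [hb]
    exact hmem i
  have hcard : Fintype.card (Fin m × Bool) = Module.finrank F (Fin (2 * m) → F) := by
    simp [Module.finrank_fintype_fun_eq_card]
    ring
  have hli : LinearIndependent F (V F lam (m := m)) :=
    linearIndependent_of_top_le_span_of_card_eq_finrank hspan.ge hcard
  -- span manipulation helpers
  have map_span : ∀ (f : (Fin (2 * m) → F) →ₗ[F] (Fin (2 * m) → F)) (x : Fin (2 * m) → F),
      (Submodule.span F {x}).map f = Submodule.span F {f x} := by
    intro f x; rw [Submodule.map_span, Set.image_singleton]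
  have span_smul : ∀ (r : F), r ≠ 0 → ∀ (x : Fin (2 * m) → F),
      Submodule.span F {r • x} = Submodule.span F {x} := fun r hr x =>
    Submodule.span_singleton_smul_eq (isUnit_iff_ne_zero.mpr hr) x
  have span_neg : ∀ (x : Fin (2 * m) → F),
      Submodule.span F {-x} = Submodule.span F {x} := by
    intro x; rw [← neg_one_smul F x]; exact span_smul _ (by norm_num) x
  -- the two generator computations
  have blockV : ∀ (i : Fin (2 * m)) (p : Fin m × Bool), ∃ q,
      (Submodule.span F {V F lam p}).map (blockGL F i (negGL F)).val
        = Submodule.span F {V F lam q} := by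
    rintro i ⟨t, s⟩
    have hge : ∀ k, (blockGL F i (negGL F)).val (stdVec F (2 * m) k)
        = if k = i then -(stdVec F (2 * m) k) else stdVec F (2 * m) k := by
      intro k; funext j
      rw [blockGL_val_apply]
      rw [show ((if k = i then -(stdVec F (2 * m) k) else stdVec F (2 * m) k) j)
          = (if k = i then -(stdVec F (2 * m) k j) else stdVec F (2 * m) k j) by
        split <;> rfl]
      rw [negGL_val_apply, hstd k j]
      rcases eq_or_ne j k with rfl | hjk
      · rfl
      · simp only [if_neg hjk, neg_zero, ite_self]
    have hlin : (blockGL F i (negGL F)).val (V F lam (t, s))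
        = (if A t = i then -(stdVec F (2 * m) (A t)) else stdVec F (2 * m) (A t))
          + C lam s • (if B t = i then -(stdVec F (2 * m) (B t)) else stdVec F (2 * m) (B t)) := by
      rw [show V F lam (t, s)
          = stdVec F (2 * m) (A t) + C lam s • stdVec F (2 * m) (B t) from rfl,
        map_add, map_smul, hge, hge]
    rw [map_span, hlin]
    by_cases h1 : A t = i
    · have h2 : ¬ (B t = i) := by rw [← h1]; exact fun h => hAB t t h.symm
      refine ⟨(t, !s), ?_⟩
      rw [if_pos h1, if_neg h2]
      have hv : -(stdVec F (2 * m) (A t)) + C lam s • stdVec F (2 * m) (B t)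
          = -(V F lam (t, !s)) := by
        show _ = -(stdVec F (2 * m) (A t) + C lam (!s) • stdVec F (2 * m) (B t))
        rw [hCnot]
        module
      rw [hv, span_neg]
    · by_cases h2 : B t = i
      · refine ⟨(t, !s), ?_⟩
        rw [if_neg h1, if_pos h2]
        have hv : stdVec F (2 * m) (A t) + C lam s • -(stdVec F (2 * m) (B t))
            = V F lam (t, !s) := by
          show _ = stdVec F (2 * m) (A t) + C lam (!s) • stdVec F (2 * m) (B t)
          rw [hCnot]
          module
        rw [hv]
      · exact ⟨(t, s), by rw [if_neg h1, if_neg h2]; rfl⟩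
  have permV : ∀ π ∈ K, ∀ p : Fin m × Bool, ∃ q,
      (Submodule.span F {V F lam p}).map (permGL F π).val
        = Submodule.span F {V F lam q} := by
    rintro π hπ ⟨t, s⟩
    have hge : ∀ k, (permGL F π (W := F)).val (stdVec F (2 * m) k) = stdVec F (2 * m) (π k) := by
      intro k; funext j
      rw [permGL_val_apply]
      simp [hstd, Equiv.symm_apply_eq]
    have hlin : (permGL F π (W := F)).val (V F lam (t, s))
        = stdVec F (2 * m) (π (A t)) + C lam s • stdVec F (2 * m) (π (B t)) := by
      rw [show V F lam (t, s)
          = stdVec F (2 * m) (A t) + C lam s • stdVec F (2 * m) (B t) from rfl,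
        map_add, map_smul, hge, hge]
    obtain ⟨t', hset⟩ := hKpart π hπ t
    rw [Set.pair_eq_pair_iff] at hset
    rw [map_span, hlin]
    rcases hset with ⟨hA2, hB2⟩ | ⟨hA2, hB2⟩
    · exact ⟨(t', s), by rw [hA2, hB2]; rfl⟩
    · refine ⟨(t', !s), ?_⟩
      rw [hA2, hB2]
      have hsmul : stdVec F (2 * m) (B t') + C lam s • stdVec F (2 * m) (A t')
          = C lam s • V F lam (t', !s) := by
        show _ = C lam s • (stdVec F (2 * m) (A t') + C lam (!s) • stdVec F (2 * m) (B t'))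
        rw [hCnot, smul_add, smul_smul]
        have h1 : C lam s * -C lam s = 1 := by linear_combination -hCsq s
        rw [h1, one_smul, add_comm]
      rw [hsmul, span_smul _ (hC0 s)]
  refine ⟨?_, ?_, ?_⟩
  · -- nonzero
    intro p
    rw [Ne, Submodule.span_singleton_eq_bot]
    intro h0
    have := congrFun h0 (A p.1)
    rw [hVA p] at this
    simp at this
  · -- internal
    rw [DirectSum.isInternal_submodule_iff_iSupIndep_and_iSup_eq_top]
    refine ⟨hli.iSupIndep_span_singleton, ?_⟩
    rw [← Submodule.span_range_eq_iSup, hspan]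
  · -- permutes
    intro g hg p
    suffices h : (∀ p, ∃ q, (Submodule.span F {V F lam p}).map (g.val)
          = Submodule.span F {V F lam q}) ∧
        (∀ p, ∃ q, (Submodule.span F {V F lam p}).map ((g⁻¹).val)
          = Submodule.span F {V F lam q}) by
      obtain ⟨q, hq⟩ := h.1 p
      exact ⟨q, hq.symm⟩
    clear p
    unfold wreath at hg
    induction hg using Subgroup.closure_induction with
    | mem x hx =>
      rcases hx with ⟨i, h, hH, rfl⟩ | ⟨π, hπ, rfl⟩
      · have hone : h = 1 ∨ h = negGL F := by
          induction hH using Subgroup.closure_induction with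
          | mem y hy => right; simpa using hy
          | one => left; rfl
          | mul a b ha hb iha ihb =>
            rcases iha with rfl | rfl <;> rcases ihb with rfl | rfl <;>
              simp [negGL_mul_self]
          | inv a ha iha =>
            rcases iha with rfl | rfl
            · left; simp
            · right; exact inv_eq_of_mul_eq_one_right negGL_mul_self
        rcases hone with rfl | rfl
        · rw [blockGL_one]
          refine ⟨fun p => ⟨p, ?_⟩, fun p => ⟨p, ?_⟩⟩ <;>
            simp only [inv_one, Units.val_one, Module.End.one_eq_id, Submodule.map_id]
        · have hinv : (blockGL F i (negGL F))⁻¹ = blockGL F i (negGL F) :=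
            inv_eq_of_mul_eq_one_right (blockGL_neg_mul_self i)
          exact ⟨blockV i, by rw [hinv]; exact blockV i⟩
      · refine ⟨permV π hπ, ?_⟩
        rw [permGL_inv]
        exact permV π⁻¹ (inv_mem hπ)
    | one =>
      refine ⟨fun p => ⟨p, ?_⟩, fun p => ⟨p, ?_⟩⟩ <;>
        simp only [inv_one, Units.val_one, Module.End.one_eq_id, Submodule.map_id]
    | mul x y hx hy ihx ihy =>
      constructor
      · intro p
        obtain ⟨q, hq⟩ := ihy.1 p
        obtain ⟨r, hr⟩ := ihx.1 q
        refine ⟨r, ?_⟩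
        rw [Units.val_mul,
          show (x.val * y.val : (Fin (2 * m) → F) →ₗ[F] (Fin (2 * m) → F))
            = x.val ∘ₗ y.val from rfl,
          Submodule.map_comp, hq, hr]
      · intro p
        obtain ⟨q, hq⟩ := ihx.2 p
        obtain ⟨r, hr⟩ := ihy.2 q
        refine ⟨r, ?_⟩
        rw [mul_inv_rev, Units.val_mul,
          show ((y⁻¹).val * (x⁻¹).val : (Fin (2 * m) → F) →ₗ[F] (Fin (2 * m) → F))
            = (y⁻¹).val ∘ₗ (x⁻¹).val from rfl,
          Submodule.map_comp, hq, hr]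
    | inv x hx ihx =>
      exact ⟨ihx.2, by rw [inv_inv]; exact ihx.1⟩

end SOIAux

/-- Let `n = 2m` be even, `λ ∈ F` with `λ² = −1`, `char F ≠ 2`, `H = {±1} ≤ GL₁(F)` and
`K ≤ S_n` transitive preserving the partition `{{1,2},…,{n−1,n}}`.  Then
`F^n = ⟨e₁+λe₂⟩ ⊕ ⟨e₁−λe₂⟩ ⊕ ⋯ ⊕ ⟨e_{n−1}+λe_n⟩ ⊕ ⟨e_{n−1}−λe_n⟩` is a system of
imprimitivity for `G = H ≀ K`. -/
theorem soi_for_sign_wreath_sqrt_neg_one (F : Type*) [Field F] (hchar : (2 : F) ≠ 0)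
    (lam : F) (hlam : lam ^ 2 = -1)
    (m : ℕ) (hm : 0 < m) (K : Subgroup (Equiv.Perm (Fin (2 * m))))
    (hKtrans : ∀ i j : Fin (2 * m), ∃ π ∈ K, π i = j)
    (hKpart : ∀ π ∈ K, ∀ t : Fin m, ∃ t' : Fin m,
      ({π ⟨2 * t.val, by omega⟩, π ⟨2 * t.val + 1, by omega⟩} : Set (Fin (2 * m))) =
        {⟨2 * t'.val, by omega⟩, ⟨2 * t'.val + 1, by omega⟩}) :
    IsSystemOfImprimitivity F (wreath F (Subgroup.closure {negGL F}) K)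
      (fun p : Fin m × Bool =>
        Submodule.span F {stdVec F (2 * m) ⟨2 * p.1.val, by omega⟩ +
          (if p.2 then -lam else lam) • stdVec F (2 * m) ⟨2 * p.1.val + 1, by omega⟩}) := by
  exact SOIAux.aux F hchar lam hlam m K hKpart
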